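/- Let s > 3/2 and let ε, μ > 0, ι, κ, α, γ, δ ∈ ℝ, β < 0 with μ|β| < 1. For all u, v ∈ H^s(ℝ), ‖f(u) - f(v)‖_s ≤ c₄ ‖u - v‖_s, where c₄ is a constant depending only on μ, β, the other parameters, ‖u‖_s and ‖v‖_s; that is, f is Lipschitz in the H^s norm on bounded sets of H^s(ℝ). -/

import Mathlib

/-!
We model the Sobolev space `H^r(ℝ)` of real-valued tempered distributions on the Fourier
side: an element `f ∈ H^r(ℝ)` is represented by its Fourier transform `F = 𝓕f : ℝ → ℂ`
(unitary convention `𝓕f(ξ) = (2π)^{-1/2} ∫ e^{-iξx} f(x) dx`), subject to the conditions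
`(1+ξ²)^{r/2} F ∈ L²(ℝ)` and the conjugate symmetry `F(-ξ) = conj (F ξ)` (real-valuedness).
Under this representation:
* the norm `‖f‖_r = ‖(1+ξ²)^{r/2} 𝓕f‖_{L²}` becomes `hsNorm r F`; `hsNorm 0` is the `L²` norm;
* `∂ₓ` becomes multiplication by `iξ` (`fourierDeriv`);
* `Λ^r = (1-∂ₓ²)^{r/2}` becomes multiplication by `(1+ξ²)^{r/2}` (`sobolevWeight r`);
* the pointwise product becomes the normalized convolution `fourierMul`.
-/

noncomputable section

open MeasureTheory Complex

/-- Fourier side of `Λ^r = (1-∂ₓ²)^{r/2}`: multiplication by the weight `(1+ξ²)^{r/2}`. -/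
def sobolevWeight (r : ℝ) (F : ℝ → ℂ) : ℝ → ℂ :=
  fun ξ => (((1 + ξ ^ 2) ^ (r / 2) : ℝ) : ℂ) * F ξ

/-- `F = 𝓕f` represents an element of `H^r(ℝ)`: `(1+ξ²)^{r/2} F ∈ L²`. -/
def MemHSobolev (r : ℝ) (F : ℝ → ℂ) : Prop :=
  MeasureTheory.MemLp (sobolevWeight r F) 2 MeasureTheory.volume

/-- The Sobolev norm `‖f‖_r = ‖(1+ξ²)^{r/2} 𝓕f‖_{L²}`; `hsNorm 0` is the `L²` norm of `f`. -/
def hsNorm (r : ℝ) (F : ℝ → ℂ) : ℝ :=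
  (MeasureTheory.eLpNorm (sobolevWeight r F) 2 MeasureTheory.volume).toReal

/-- `F = 𝓕f` for a real-valued `f` iff `F` is (a.e.) conjugate-symmetric. -/
def RealSymm (F : ℝ → ℂ) : Prop :=
  ∀ᵐ ξ : ℝ, F (-ξ) = starRingEnd ℂ (F ξ)

/-- Fourier side of the derivative `∂ₓ`: multiplication by `iξ`. -/
def fourierDeriv (F : ℝ → ℂ) : ℝ → ℂ :=
  fun ξ => Complex.I * (ξ : ℂ) * F ξ

/-- Fourier side of the pointwise product: the normalized convolution
`(𝓕(fg))(ξ) = (2π)^{-1/2} ∫ 𝓕f(η) 𝓕g(ξ-η) dη`. -/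
def fourierMul (F G : ℝ → ℂ) : ℝ → ℂ :=
  fun ξ => ((Real.sqrt (2 * Real.pi) : ℝ) : ℂ)⁻¹ * ∫ η : ℝ, F η * G (ξ - η)

/-- Fourier side of
`g(u) = (1-α/β)u + ((3ε-2)/4 - 1/(2μβ))u² + (ε²ι/3)u³ + (ε³κ/4)u⁴
        + ((3εμγ - εμδ - μβ)/2)(u_x)²`. -/
def fourierG (ε μ ι κ α β γ δ : ℝ) (U : ℝ → ℂ) : ℝ → ℂ := fun ξ =>
  ((1 - α / β : ℝ) : ℂ) * U ξ
    + (((3 * ε - 2) / 4 - 1 / (2 * μ * β) : ℝ) : ℂ) * fourierMul U U ξ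
    + ((ε ^ 2 * ι / 3 : ℝ) : ℂ) * fourierMul U (fourierMul U U) ξ
    + ((ε ^ 3 * κ / 4 : ℝ) : ℂ) * fourierMul U (fourierMul U (fourierMul U U)) ξ
    + (((3 * ε * μ * γ - ε * μ * δ - μ * β) / 2 : ℝ) : ℂ) *
        fourierMul (fourierDeriv U) (fourierDeriv U) ξ

/-- Fourier side of `f(u) = -(1+μβ∂ₓ²)^{-1}∂ₓ g(u)`: multiplication of `𝓕(g(u))` by the
symbol `-iξ/(1-μβξ²)`. -/
def fourierF (ε μ ι κ α β γ δ : ℝ) (U : ℝ → ℂ) : ℝ → ℂ := fun ξ =>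
  -(Complex.I * (ξ : ℂ) / (1 - ((μ * β : ℝ) : ℂ) * (ξ : ℂ) ^ 2)) * fourierG ε μ ι κ α β γ δ U ξ

namespace FLip

open scoped ENNReal NNReal

/-! ### Elementary facts about the weight -/

lemma base_pos (ξ : ℝ) : (0:ℝ) < 1 + ξ^2 := by positivity
lemma one_le_base (ξ : ℝ) : (1:ℝ) ≤ 1 + ξ^2 := by nlinarith [sq_nonneg ξ]
lemma w_pos (r ξ : ℝ) : (0:ℝ) < (1+ξ^2)^(r/2) := Real.rpow_pos_of_pos (base_pos ξ) _

lemma hpq22 : (2:ℝ).HolderConjugate 2 := by constructor <;> norm_num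

lemma nn_weight (r : ℝ) (F : ℝ → ℂ) (ξ : ℝ) :
    (‖sobolevWeight r F ξ‖₊ : ℝ≥0∞) = ENNReal.ofReal ((1+ξ^2)^(r/2)) * (‖F ξ‖₊ : ℝ≥0∞) := by
  simp only [sobolevWeight, nnnorm_mul, ENNReal.coe_mul]
  congr 1
  rw [← Real.enorm_eq_ofReal (w_pos r ξ).le]
  simp [enorm_eq_nnnorm]

lemma cont_w (r : ℝ) : Continuous fun ξ : ℝ => (1+ξ^2)^(r/2) :=
  (continuous_const.add (continuous_pow 2)).rpow_const fun ξ => Or.inl (base_pos ξ).ne'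

lemma aesm_weight {r : ℝ} {F : ℝ → ℂ}
    (hF : MeasureTheory.AEStronglyMeasurable F MeasureTheory.volume) :
    MeasureTheory.AEStronglyMeasurable (sobolevWeight r F) MeasureTheory.volume :=
  ((Complex.continuous_ofReal.comp (cont_w r)).aestronglyMeasurable).mul hF

lemma aesm_of_weight {r : ℝ} {F : ℝ → ℂ}
    (h : MeasureTheory.AEStronglyMeasurable (sobolevWeight r F) MeasureTheory.volume) :
    MeasureTheory.AEStronglyMeasurable F MeasureTheory.volume := by
  have he : F = fun ξ => ((((1+ξ^2)^(r/2) : ℝ) : ℂ))⁻¹ * sobolevWeight r F ξ := by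
    funext ξ
    have h0 : (((1+ξ^2)^(r/2) : ℝ) : ℂ) ≠ 0 := by
      simpa using (w_pos r ξ).ne'
    field_simp [sobolevWeight]
    simp only [sobolevWeight]; ring
  rw [he]
  exact ((Complex.continuous_ofReal.comp (cont_w r)).inv₀
    (fun ξ => by simpa using (w_pos r ξ).ne')).aestronglyMeasurable.mul h

lemma eLpNorm_two_eq (f : ℝ → ℂ) :
    MeasureTheory.eLpNorm f 2 MeasureTheory.volume
      = (∫⁻ ξ, (‖f ξ‖₊ : ℝ≥0∞) ^ (2:ℝ)) ^ ((1:ℝ)/2) := by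
  rw [MeasureTheory.eLpNorm_eq_lintegral_rpow_enorm_toReal two_ne_zero ENNReal.ofNat_ne_top]
  norm_num [enorm_eq_nnnorm]

lemma eLpNorm_two_le {f : ℝ → ℂ} {φ : ℝ → ℝ≥0∞} (h : ∀ ξ, (‖f ξ‖₊ : ℝ≥0∞) ≤ φ ξ) :
    MeasureTheory.eLpNorm f 2 MeasureTheory.volume ≤ (∫⁻ ξ, φ ξ ^ (2:ℝ)) ^ ((1:ℝ)/2) := by
  rw [eLpNorm_two_eq]
  exact ENNReal.rpow_le_rpow
    (MeasureTheory.lintegral_mono fun ξ => ENNReal.rpow_le_rpow (h ξ) (by norm_num))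
    (by norm_num)

/-! ### Real inequalities -/

lemma rpow_half_le (ξ : ℝ) : (1+ξ^2) ^ ((1:ℝ)/2) ≤ 1 + |ξ| := by
  rw [← Real.sqrt_eq_rpow]
  have h : Real.sqrt (1+ξ^2) ≤ Real.sqrt ((1+|ξ|)^2) := by
    apply Real.sqrt_le_sqrt; nlinarith [abs_nonneg ξ, _root_.sq_abs ξ]
  simpa [Real.sqrt_sq (by positivity : (0:ℝ) ≤ 1 + |ξ|)] using h

lemma abs_le_rpow_half (ξ : ℝ) : |ξ| ≤ (1+ξ^2) ^ ((1:ℝ)/2) := by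
  rw [← Real.sqrt_eq_rpow]
  have h : |ξ| = Real.sqrt (ξ^2) := (Real.sqrt_sq_eq_abs ξ).symm
  rw [h]
  apply Real.sqrt_le_sqrt; nlinarith

lemma weight_split (s ξ : ℝ) :
    (1+ξ^2)^(s/2) = (1+ξ^2)^((s-1)/2) * (1+ξ^2)^((1:ℝ)/2) := by
  rw [← Real.rpow_add (base_pos ξ)]; ring_nf

/-- Peetre-type inequality. -/
lemma peetre {t : ℝ} (ht : 0 ≤ t) (ξ η : ℝ) :
    (1+ξ^2)^(t/2) ≤ 2^t * ((1+η^2)^(t/2) + (1+(ξ-η)^2)^(t/2)) := by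
  rcases le_total (η^2) ((ξ-η)^2) with hm | hm
  · have h1 : 1 + ξ^2 ≤ 4 * (1 + (ξ-η)^2) := by
      nlinarith [sq_nonneg (η + (ξ-η)), sq_nonneg (η - (ξ-η))]
    have h2 : (1+ξ^2)^(t/2) ≤ (4 * (1 + (ξ-η)^2))^(t/2) :=
      Real.rpow_le_rpow (base_pos ξ).le h1 (by positivity)
    have h3 : ((4:ℝ) * (1 + (ξ-η)^2))^(t/2) = 2^t * (1 + (ξ-η)^2)^(t/2) := by
      rw [Real.mul_rpow (by norm_num) (base_pos (ξ-η)).le]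
      congr 1
      rw [show (4:ℝ) = 2^(2:ℝ) by norm_num, ← Real.rpow_mul (by norm_num : (0:ℝ) ≤ 2)]
      rw [show 2 * (t / 2) = t by ring]
    have h4 : (0:ℝ) ≤ 2^t * (1+η^2)^(t/2) := by positivity
    nlinarith [h2, h3.le, h3.ge]
  · have h1 : 1 + ξ^2 ≤ 4 * (1 + η^2) := by
      nlinarith [sq_nonneg (η + (ξ-η)), sq_nonneg (η - (ξ-η))]
    have h2 : (1+ξ^2)^(t/2) ≤ (4 * (1 + η^2))^(t/2) :=
      Real.rpow_le_rpow (base_pos ξ).le h1 (by positivity)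
    have h3 : ((4:ℝ) * (1 + η^2))^(t/2) = 2^t * (1 + η^2)^(t/2) := by
      rw [Real.mul_rpow (by norm_num) (base_pos η).le]
      congr 1
      rw [show (4:ℝ) = 2^(2:ℝ) by norm_num, ← Real.rpow_mul (by norm_num : (0:ℝ) ≤ 2)]
      rw [show 2 * (t / 2) = t by ring]
    have h4 : (0:ℝ) ≤ 2^t * (1+(ξ-η)^2)^(t/2) := by positivity
    nlinarith [h2, h3.le, h3.ge]

lemma peetre_e {t : ℝ} (ht : 0 ≤ t) (ξ η : ℝ) :
    ENNReal.ofReal ((1+ξ^2)^(t/2))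
      ≤ ENNReal.ofReal (2^t) *
        (ENNReal.ofReal ((1+η^2)^(t/2)) + ENNReal.ofReal ((1+(ξ-η)^2)^(t/2))) := by
  rw [← ENNReal.ofReal_add (w_pos t η).le (w_pos t (ξ-η)).le,
    ← ENNReal.ofReal_mul (by positivity)]
  exact ENNReal.ofReal_le_ofReal (peetre ht ξ η)

end FLip
namespace FLip

open MeasureTheory
open scoped ENNReal NNReal

/-! ### Measure-theoretic helpers -/

def Ae (t : ℝ) : ℝ≥0∞ := (∫⁻ ξ : ℝ, ENNReal.ofReal ((1+ξ^2) ^ (-t))) ^ ((1:ℝ)/2)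

lemma Ae_lt_top {t : ℝ} (ht : 1/2 < t) : Ae t < ∞ := by
  have h2t : (Module.finrank ℝ ℝ : ℝ) < 2*t := by
    simp only [Module.finrank_self, Nat.cast_one]; linarith
  have hi := integrable_rpow_neg_one_add_norm_sq (μ := volume) h2t
  have hfin := hi.hasFiniteIntegral
  rw [HasFiniteIntegral] at hfin
  have heq : (∫⁻ ξ : ℝ, ENNReal.ofReal ((1+ξ^2) ^ (-t)))
      = ∫⁻ ξ : ℝ, (‖(1 + ‖ξ‖^2) ^ (-(2*t)/2)‖₊ : ℝ≥0∞) := by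
    apply lintegral_congr; intro ξ
    rw [← enorm_eq_nnnorm, Real.enorm_eq_ofReal (by positivity)]
    rw [Real.norm_eq_abs, _root_.sq_abs, show -(2*t)/2 = -t by ring]
  refine ENNReal.rpow_lt_top_of_nonneg (by norm_num) ?_
  rw [heq]; exact hfin.ne

lemma qmp_sub : Measure.QuasiMeasurePreserving (fun z : ℝ × ℝ => z.1 - z.2)
    ((volume : Measure ℝ).prod volume) volume := by
  have h1 := (measurePreserving_sub_prod (volume : Measure ℝ) volume).quasiMeasurePreserving
  have h2 := Measure.quasiMeasurePreserving_fst
    (μ := (volume : Measure ℝ)) (ν := (volume : Measure ℝ))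
  exact h2.comp h1

lemma lint_sub_left (f : ℝ → ℝ≥0∞) (c : ℝ) : ∫⁻ x, f (c - x) = ∫⁻ x, f x := by
  have h := lintegral_map_equiv (μ := volume) f (MeasurableEquiv.subLeft c)
  have h2 : Measure.map (⇑(MeasurableEquiv.subLeft c)) volume = volume := by
    have := (Measure.measurePreserving_sub_left volume c).map_eq
    convert this using 2 <;> rfl
  rw [h2] at h
  simpa [MeasurableEquiv.subLeft, Equiv.subLeft] using h.symm

lemma aem_shift {ψ : ℝ → ℝ≥0∞} (hψ : AEMeasurable ψ volume) (ξ : ℝ) :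
    AEMeasurable (fun η => ψ (ξ - η)) volume :=
  hψ.comp_quasiMeasurePreserving
    (Measure.measurePreserving_sub_left volume ξ).quasiMeasurePreserving

lemma aem_shift_r {ψ : ℝ → ℝ≥0∞} (hψ : AEMeasurable ψ volume) (η : ℝ) :
    AEMeasurable (fun ξ => ψ (ξ - η)) volume :=
  hψ.comp_quasiMeasurePreserving
    (measurePreserving_sub_right volume η).quasiMeasurePreserving

lemma aemeasurable_lintegral_kernel {f : ℝ × ℝ → ℝ≥0∞}
    (hf : AEMeasurable f ((volume : Measure ℝ).prod volume)) :
    AEMeasurable (fun ξ => ∫⁻ η, f (ξ, η)) volume := by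
  rcases hf with ⟨g, hg, hfg⟩
  have hm : Measurable fun ξ : ℝ => ∫⁻ η, g (ξ, η) ∂(volume : Measure ℝ) :=
    hg.lintegral_prod_right'
  refine hm.aemeasurable.congr ?_
  filter_upwards [Measure.ae_ae_of_ae_prod hfg] with ξ hξ
  exact (lintegral_congr_ae hξ).symm

lemma aem_prod_shift {ψ : ℝ → ℝ≥0∞} (hψ : AEMeasurable ψ volume) :
    AEMeasurable (fun z : ℝ × ℝ => ψ (z.1 - z.2)) ((volume : Measure ℝ).prod volume) :=
  hψ.comp_quasiMeasurePreserving qmp_sub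

lemma aem_prod_snd {φ : ℝ → ℝ≥0∞} (hφ : AEMeasurable φ volume) :
    AEMeasurable (fun z : ℝ × ℝ => φ z.2) ((volume : Measure ℝ).prod volume) :=
  hφ.comp_quasiMeasurePreserving Measure.quasiMeasurePreserving_snd

/-- Young's inequality `‖φ ⋆ ψ‖₂² ≤ ‖φ‖₁² ‖ψ‖₂²` for `ℝ≥0∞`-valued functions. -/
lemma conv_L2 {φ ψ : ℝ → ℝ≥0∞} (hφ : AEMeasurable φ volume) (hψ : AEMeasurable ψ volume) :
    ∫⁻ ξ, (∫⁻ η, φ η * ψ (ξ - η)) ^ (2:ℝ)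
      ≤ (∫⁻ η, φ η) ^ (2:ℝ) * ∫⁻ ζ, ψ ζ ^ (2:ℝ) := by
  set A := ∫⁻ η, φ η with hA
  have step1 : ∀ ξ, (∫⁻ η, φ η * ψ (ξ - η))
      ≤ A ^ ((1:ℝ)/2) * (∫⁻ η, φ η * ψ (ξ-η) ^ (2:ℝ)) ^ ((1:ℝ)/2) := by
    intro ξ
    have hψξ := aem_shift hψ ξ
    have h := ENNReal.lintegral_mul_le_Lp_mul_Lq volume hpq22
      (f := fun η => φ η ^ ((1:ℝ)/2)) (g := fun η => φ η ^ ((1:ℝ)/2) * ψ (ξ - η))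
      (hφ.pow_const _) ((hφ.pow_const _).mul hψξ)
    have e1 : ∀ η, (fun η => φ η ^ ((1:ℝ)/2)) η * ((fun η => φ η ^ ((1:ℝ)/2) * ψ (ξ - η)) η)
        = φ η * ψ (ξ - η) := by
      intro η
      rw [← mul_assoc, ← ENNReal.rpow_add_of_nonneg _ _ (by norm_num) (by norm_num)]
      norm_num
    have e2 : ∀ η, ((fun η => φ η ^ ((1:ℝ)/2)) η) ^ (2:ℝ) = φ η := by
      intro η
      rw [← ENNReal.rpow_mul]; norm_num
    have e3 : ∀ η, ((fun η => φ η ^ ((1:ℝ)/2) * ψ (ξ - η)) η) ^ (2:ℝ)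
        = φ η * ψ (ξ - η) ^ (2:ℝ) := by
      intro η
      rw [ENNReal.mul_rpow_of_nonneg _ _ (by norm_num), ← ENNReal.rpow_mul]
      norm_num
    calc (∫⁻ η, φ η * ψ (ξ - η))
        = ∫⁻ η, (fun η => φ η ^ ((1:ℝ)/2)) η * ((fun η => φ η ^ ((1:ℝ)/2) * ψ (ξ - η)) η) :=
          lintegral_congr fun η => (e1 η).symm
      _ ≤ (∫⁻ η, ((fun η => φ η ^ ((1:ℝ)/2)) η) ^ (2:ℝ)) ^ ((1:ℝ)/2)
            * (∫⁻ η, ((fun η => φ η ^ ((1:ℝ)/2) * ψ (ξ - η)) η) ^ (2:ℝ)) ^ ((1:ℝ)/2) := by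
          simpa using h
      _ = A ^ ((1:ℝ)/2) * (∫⁻ η, φ η * ψ (ξ-η) ^ (2:ℝ)) ^ ((1:ℝ)/2) := by
          rw [lintegral_congr e2, lintegral_congr e3]
  have step2 : ∀ ξ, (∫⁻ η, φ η * ψ (ξ - η)) ^ (2:ℝ)
      ≤ A * ∫⁻ η, φ η * ψ (ξ-η) ^ (2:ℝ) := by
    intro ξ
    calc (∫⁻ η, φ η * ψ (ξ - η)) ^ (2:ℝ)
        ≤ (A ^ ((1:ℝ)/2) * (∫⁻ η, φ η * ψ (ξ-η) ^ (2:ℝ)) ^ ((1:ℝ)/2)) ^ (2:ℝ) :=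
          ENNReal.rpow_le_rpow (step1 ξ) (by norm_num)
      _ = A * ∫⁻ η, φ η * ψ (ξ-η) ^ (2:ℝ) := by
          rw [ENNReal.mul_rpow_of_nonneg _ _ (by norm_num), ← ENNReal.rpow_mul,
            ← ENNReal.rpow_mul]
          norm_num
  have swap : ∫⁻ ξ, ∫⁻ η, φ η * ψ (ξ-η) ^ (2:ℝ) = A * ∫⁻ ζ, ψ ζ ^ (2:ℝ) := by
    have haem : AEMeasurable (Function.uncurry fun ξ η => φ η * ψ (ξ-η) ^ (2:ℝ))
        ((volume : Measure ℝ).prod volume) :=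
      (aem_prod_snd hφ).mul ((aem_prod_shift hψ).pow_const _)
    rw [lintegral_lintegral_swap haem]
    calc ∫⁻ η, ∫⁻ ξ, φ η * ψ (ξ-η) ^ (2:ℝ)
        = ∫⁻ η, φ η * ∫⁻ ξ, ψ (ξ-η) ^ (2:ℝ) := by
          apply lintegral_congr; intro η
          exact lintegral_const_mul'' (φ η) ((aem_shift_r hψ η).pow_const _)
      _ = ∫⁻ η, φ η * ∫⁻ ζ, ψ ζ ^ (2:ℝ) := by
          apply lintegral_congr; intro η
          rw [lintegral_sub_right_eq_self (fun x => ψ x ^ (2:ℝ)) η]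
      _ = A * ∫⁻ ζ, ψ ζ ^ (2:ℝ) := by
          rw [mul_comm]
          rw [← lintegral_const_mul'' _ hφ]
          exact lintegral_congr fun η => mul_comm _ _
  calc ∫⁻ ξ, (∫⁻ η, φ η * ψ (ξ - η)) ^ (2:ℝ)
      ≤ ∫⁻ ξ, A * ∫⁻ η, φ η * ψ (ξ-η) ^ (2:ℝ) := lintegral_mono step2
    _ = A * ∫⁻ ξ, ∫⁻ η, φ η * ψ (ξ-η) ^ (2:ℝ) := by
        refine lintegral_const_mul'' A
          (aemeasurable_lintegral_kernel (f := fun z : ℝ × ℝ => φ z.2 * ψ (z.1-z.2) ^ (2:ℝ)) ?_)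
        exact (aem_prod_snd hφ).mul ((aem_prod_shift hψ).pow_const _)
    _ = A * (A * ∫⁻ ζ, ψ ζ ^ (2:ℝ)) := by rw [swap]
    _ = A ^ (2:ℝ) * ∫⁻ ζ, ψ ζ ^ (2:ℝ) := by
        rw [← mul_assoc]; congr 1
        rw [show (2:ℝ) = ((2:ℕ):ℝ) by norm_num, ENNReal.rpow_natCast, sq]

end FLip
namespace FLip

open MeasureTheory
open scoped ENNReal NNReal

/-! ### The `H^r` seminorm on the `ℝ≥0∞` level -/

def eN (r : ℝ) (F : ℝ → ℂ) : ℝ≥0∞ := eLpNorm (sobolevWeight r F) 2 volume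

lemma eN_congr {r : ℝ} {F G : ℝ → ℂ} (h : ∀ ξ, F ξ = G ξ) : eN r F = eN r G := by
  rw [show F = G from funext h]

lemma eN_le_mul_of_pointwise {r r' : ℝ} {F G : ℝ → ℂ} {M : ℝ} (hM : 0 ≤ M)
    (h : ∀ ξ, ‖sobolevWeight r F ξ‖ ≤ M * ‖sobolevWeight r' G ξ‖) :
    eN r F ≤ ENNReal.ofReal M * eN r' G := by
  calc eN r F ≤ eLpNorm (fun ξ => (M:ℂ) * sobolevWeight r' G ξ) 2 volume :=
        eLpNorm_mono fun ξ => by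
          simpa [norm_mul, Complex.norm_real, Real.norm_eq_abs, _root_.abs_of_nonneg hM]
            using h ξ
    _ = (‖(M:ℂ)‖₊ : ℝ≥0∞) * eLpNorm (sobolevWeight r' G) 2 volume := by
        exact eLpNorm_const_smul (M:ℂ) (sobolevWeight r' G) 2 volume
    _ = ENNReal.ofReal M * eN r' G := by
        congr 1
        rw [← Real.enorm_eq_ofReal hM]
        simp [enorm_eq_nnnorm]

lemma eN_mono_exp {r s : ℝ} (hrs : r ≤ s) (F : ℝ → ℂ) : eN r F ≤ eN s F := by
  have h := eN_le_mul_of_pointwise (r := r) (r' := s) (F := F) (G := F) zero_le_one ?_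
  · simpa using h
  · intro ξ
    simp only [sobolevWeight, norm_mul, one_mul]
    apply mul_le_mul_of_nonneg_right _ (norm_nonneg _)
    simp only [Complex.norm_real, Real.norm_eq_abs]
    rw [abs_of_pos (w_pos r ξ), abs_of_pos (w_pos s ξ)]
    exact Real.rpow_le_rpow_of_exponent_le (one_le_base ξ) (by linarith)

lemma eN_deriv_le (s : ℝ) (F : ℝ → ℂ) : eN (s-1) (fourierDeriv F) ≤ eN s F := by
  have h := eN_le_mul_of_pointwise (r := s-1) (r' := s) (F := fourierDeriv F) (G := F)
    zero_le_one ?_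
  · simpa using h
  · intro ξ
    simp only [sobolevWeight, fourierDeriv, norm_mul, one_mul, Complex.norm_real,
      Complex.norm_I, Real.norm_eq_abs]
    rw [abs_of_pos (w_pos (s-1) ξ), abs_of_pos (w_pos s ξ)]
    calc (1+ξ^2)^((s-1)/2) * (|ξ| * ‖F ξ‖)
        = ((1+ξ^2)^((s-1)/2) * |ξ|) * ‖F ξ‖ := by ring
      _ ≤ (1+ξ^2)^(s/2) * ‖F ξ‖ := by
          apply mul_le_mul_of_nonneg_right _ (norm_nonneg _)
          rw [weight_split s ξ]
          exact mul_le_mul_of_nonneg_left (abs_le_rpow_half ξ) (w_pos (s-1) ξ).le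
  
lemma eN_add_le {r : ℝ} {F G : ℝ → ℂ} (hF : AEStronglyMeasurable F volume)
    (hG : AEStronglyMeasurable G volume) :
    eN r (fun ξ => F ξ + G ξ) ≤ eN r F + eN r G := by
  have he : sobolevWeight r (fun ξ => F ξ + G ξ)
      = fun ξ => sobolevWeight r F ξ + sobolevWeight r G ξ := by
    funext ξ; simp only [sobolevWeight]; ring
  rw [eN, he]
  exact eLpNorm_add_le (aesm_weight hF) (aesm_weight hG) one_le_two

lemma eN_const_mul (r : ℝ) (c : ℂ) (F : ℝ → ℂ) :
    eN r (fun ξ => c * F ξ) = (‖c‖₊ : ℝ≥0∞) * eN r F := by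
  have he : sobolevWeight r (fun ξ => c * F ξ) = c • sobolevWeight r F := by
    funext ξ; simp only [sobolevWeight, Pi.smul_apply, smul_eq_mul]; ring
  rw [eN, he, eLpNorm_const_smul]
  rfl

lemma nn_real_cast (r : ℝ) : ((‖((r:ℝ):ℂ)‖₊ : ℝ≥0∞)) = ENNReal.ofReal |r| := by
  rw [← Real.enorm_eq_ofReal (abs_nonneg r)]
  simp [enorm_eq_nnnorm]

lemma eN_real_const_mul (t r : ℝ) (F : ℝ → ℂ) :
    eN t (fun ξ => ((r:ℝ):ℂ) * F ξ) = ENNReal.ofReal |r| * eN t F := by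
  rw [eN_const_mul, nn_real_cast]

lemma memL2_of_eN {r : ℝ} (hr : 0 ≤ r) {F : ℝ → ℂ}
    (hF : AEStronglyMeasurable F volume) (hfin : eN r F ≠ ∞) : MemLp F 2 volume := by
  refine ⟨hF, lt_of_le_of_lt (eLpNorm_mono fun ξ => ?_) hfin.lt_top⟩
  simp only [sobolevWeight, norm_mul, Complex.norm_real, Real.norm_eq_abs]
  rw [abs_of_pos (w_pos r ξ)]
  have h1 : (1:ℝ) ≤ (1+ξ^2)^(r/2) := by
    have h2 := Real.rpow_le_rpow_of_exponent_le (one_le_base ξ) (by linarith : (0:ℝ) ≤ r/2)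
    simpa using h2
  nlinarith [norm_nonneg (F ξ)]

/-! ### L¹ bound -/

lemma l1_bound {t : ℝ} (ht : 1/2 < t) {F : ℝ → ℂ}
    (hF : AEStronglyMeasurable F volume) :
    ∫⁻ ξ, (‖F ξ‖₊ : ℝ≥0∞) ≤ Ae t * eN t F := by
  have hw := aesm_weight (r := t) hF
  have hpoint : ∀ ξ, (‖F ξ‖₊ : ℝ≥0∞)
      = ENNReal.ofReal ((1+ξ^2)^((-t)/2)) * (‖sobolevWeight t F ξ‖₊ : ℝ≥0∞) := by
    intro ξ
    rw [nn_weight, ← mul_assoc,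
      ← ENNReal.ofReal_mul (Real.rpow_nonneg (base_pos ξ).le _),
      ← Real.rpow_add (base_pos ξ)]
    rw [show (-t)/2 + t/2 = 0 by ring, Real.rpow_zero]
    simp
  have hmf : AEMeasurable (fun ξ : ℝ => ENNReal.ofReal ((1+ξ^2)^((-t)/2))) volume :=
    (ENNReal.measurable_ofReal.comp (cont_w (-t)).measurable).aemeasurable
  calc ∫⁻ ξ, (‖F ξ‖₊ : ℝ≥0∞)
      = ∫⁻ ξ, ENNReal.ofReal ((1+ξ^2)^((-t)/2)) * (‖sobolevWeight t F ξ‖₊ : ℝ≥0∞) :=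
        lintegral_congr hpoint
    _ ≤ (∫⁻ ξ, ENNReal.ofReal ((1+ξ^2)^((-t)/2)) ^ (2:ℝ)) ^ ((1:ℝ)/2)
          * (∫⁻ ξ, ((‖sobolevWeight t F ξ‖₊ : ℝ≥0∞)) ^ (2:ℝ)) ^ ((1:ℝ)/2) := by
        simpa [enorm_eq_nnnorm] using ENNReal.lintegral_mul_le_Lp_mul_Lq volume hpq22 hmf hw.enorm
    _ = Ae t * eN t F := by
        rw [eN, eLpNorm_two_eq]
        congr 1
        unfold Ae
        congr 1
        apply lintegral_congr; intro ξ
        rw [ENNReal.ofReal_rpow_of_nonneg (Real.rpow_nonneg (base_pos ξ).le _)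
            (by norm_num : (0:ℝ) ≤ 2),
          ← Real.rpow_mul (base_pos ξ).le]
        norm_num

/-! ### Measurability of `fourierMul` -/

lemma aesm_fourierMul {F G : ℝ → ℂ} (hF : AEStronglyMeasurable F volume)
    (hG : AEStronglyMeasurable G volume) :
    AEStronglyMeasurable (fourierMul F G) volume := by
  refine aestronglyMeasurable_const.mul ?_
  have hker : AEStronglyMeasurable (fun z : ℝ × ℝ => F z.2 * G (z.1 - z.2))
      ((volume : Measure ℝ).prod volume) :=
    (hF.comp_quasiMeasurePreserving Measure.quasiMeasurePreserving_snd).mul (hG.comp_quasiMeasurePreserving qmp_sub)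
  exact hker.integral_prod_right'

/-! ### The algebra bound -/

def cAlg (t : ℝ) : ℝ≥0∞ :=
  ENNReal.ofReal ((Real.sqrt (2*Real.pi))⁻¹ * 2^t) * (2 * Ae t)

lemma cAlg_lt_top {t : ℝ} (ht : 1/2 < t) : cAlg t < ∞ :=
  ENNReal.mul_lt_top ENNReal.ofReal_lt_top (by
    exact ENNReal.mul_lt_top (by norm_num) (Ae_lt_top ht))

lemma eN_fourierMul_le {t : ℝ} (ht : 1/2 < t) {F G : ℝ → ℂ}
    (hF : AEStronglyMeasurable F volume) (hG : AEStronglyMeasurable G volume) :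
    eN t (fourierMul F G) ≤ cAlg t * eN t F * eN t G := by
  have ht0 : (0:ℝ) ≤ t := by linarith
  set c' : ℝ := (Real.sqrt (2*Real.pi))⁻¹ with hc'
  have hc'0 : 0 ≤ c' := by positivity
  set f0 : ℝ → ℝ≥0∞ := fun ξ => (‖F ξ‖₊ : ℝ≥0∞) with hf0
  set g0 : ℝ → ℝ≥0∞ := fun ξ => (‖G ξ‖₊ : ℝ≥0∞) with hg0
  set wF : ℝ → ℝ≥0∞ := fun ξ => (‖sobolevWeight t F ξ‖₊ : ℝ≥0∞) with hwF
  set wG : ℝ → ℝ≥0∞ := fun ξ => (‖sobolevWeight t G ξ‖₊ : ℝ≥0∞) with hwG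
  have af0 : AEMeasurable f0 volume := hF.enorm
  have ag0 : AEMeasurable g0 volume := hG.enorm
  have awF : AEMeasurable wF volume := (aesm_weight hF).enorm
  have awG : AEMeasurable wG volume := (aesm_weight hG).enorm
  set k : ℝ≥0∞ := ENNReal.ofReal (c' * 2^t) with hk
  set Conv1 : ℝ → ℝ≥0∞ := fun ξ => ∫⁻ η, wF η * g0 (ξ - η) with hConv1
  set Conv2 : ℝ → ℝ≥0∞ := fun ξ => ∫⁻ η, f0 η * wG (ξ - η) with hConv2
  have aConv1 : AEMeasurable Conv1 volume := by
    refine aemeasurable_lintegral_kernel (f := fun z : ℝ × ℝ => wF z.2 * g0 (z.1 - z.2)) ?_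
    exact (aem_prod_snd awF).mul (aem_prod_shift ag0)
  have aConv2 : AEMeasurable Conv2 volume := by
    refine aemeasurable_lintegral_kernel (f := fun z : ℝ × ℝ => f0 z.2 * wG (z.1 - z.2)) ?_
    exact (aem_prod_snd af0).mul (aem_prod_shift awG)
  -- pointwise bound
  have pointA : ∀ ξ, (‖sobolevWeight t (fourierMul F G) ξ‖₊ : ℝ≥0∞)
      ≤ k * (Conv1 ξ + Conv2 ξ) := by
    intro ξ
    rw [nn_weight]
    have h1 : (‖fourierMul F G ξ‖₊ : ℝ≥0∞)
        ≤ ENNReal.ofReal c' * ∫⁻ η, f0 η * g0 (ξ - η) := by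
      unfold fourierMul
      rw [nnnorm_mul, ENNReal.coe_mul]
      have hnc : ((‖(((Real.sqrt (2*Real.pi) : ℝ) : ℂ))⁻¹‖₊ : ℝ≥0∞)) = ENNReal.ofReal c' := by
        rw [hc', ← Real.enorm_eq_ofReal (by positivity)]
        simp [enorm_eq_nnnorm]
      rw [hnc]
      refine mul_le_mul' le_rfl ?_
      calc (‖∫ η : ℝ, F η * G (ξ - η)‖₊ : ℝ≥0∞)
          ≤ ∫⁻ η, (‖F η * G (ξ - η)‖₊ : ℝ≥0∞) := enorm_integral_le_lintegral_enorm _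
        _ = ∫⁻ η, f0 η * g0 (ξ - η) := by
            apply lintegral_congr; intro η
            rw [nnnorm_mul, ENNReal.coe_mul]
    calc ENNReal.ofReal ((1+ξ^2)^(t/2)) * (‖fourierMul F G ξ‖₊ : ℝ≥0∞)
        ≤ ENNReal.ofReal ((1+ξ^2)^(t/2)) * (ENNReal.ofReal c' * ∫⁻ η, f0 η * g0 (ξ - η)) :=
          mul_le_mul' le_rfl h1
      _ = ENNReal.ofReal c' * ∫⁻ η, ENNReal.ofReal ((1+ξ^2)^(t/2)) * (f0 η * g0 (ξ - η)) := by
          rw [lintegral_const_mul' _ _ ENNReal.ofReal_ne_top]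
          ring
      _ ≤ ENNReal.ofReal c' * ∫⁻ η, ENNReal.ofReal (2^t) *
            (wF η * g0 (ξ - η) + f0 η * wG (ξ - η)) := by
          refine mul_le_mul' le_rfl (lintegral_mono fun η => ?_)
          have hp := peetre_e ht0 ξ η
          calc ENNReal.ofReal ((1+ξ^2)^(t/2)) * (f0 η * g0 (ξ - η))
              ≤ (ENNReal.ofReal (2^t) *
                  (ENNReal.ofReal ((1+η^2)^(t/2)) + ENNReal.ofReal ((1+(ξ-η)^2)^(t/2))))
                  * (f0 η * g0 (ξ - η)) := mul_le_mul' hp le_rfl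
            _ = ENNReal.ofReal (2^t) * (wF η * g0 (ξ - η) + f0 η * wG (ξ - η)) := by
                rw [hwF, hwG]
                simp only [nn_weight]
                ring
      _ = k * (Conv1 ξ + Conv2 ξ) := by
          rw [lintegral_const_mul' (ENNReal.ofReal (2^t)) _ ENNReal.ofReal_ne_top,
            ← mul_assoc, ← ENNReal.ofReal_mul hc'0]
          congr 1
          rw [hConv1, hConv2]
          exact lintegral_add_left' (awF.mul (aem_shift ag0 ξ)) _
  -- L² bound
  have hk2 : k ^ (2:ℝ) ≠ ∞ := by
    refine ENNReal.rpow_ne_top_of_nonneg (by norm_num) ENNReal.ofReal_ne_top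
  have main : eN t (fourierMul F G)
      ≤ k * ((∫⁻ ξ, Conv1 ξ ^ (2:ℝ)) ^ ((1:ℝ)/2)
            + (∫⁻ ξ, Conv2 ξ ^ (2:ℝ)) ^ ((1:ℝ)/2)) := by
    calc eN t (fourierMul F G)
        ≤ (∫⁻ ξ, (k * (Conv1 ξ + Conv2 ξ)) ^ (2:ℝ)) ^ ((1:ℝ)/2) := eLpNorm_two_le pointA
      _ = k * (∫⁻ ξ, (Conv1 ξ + Conv2 ξ) ^ (2:ℝ)) ^ ((1:ℝ)/2) := by
          have he : ∀ ξ, (k * (Conv1 ξ + Conv2 ξ)) ^ (2:ℝ)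
              = k ^ (2:ℝ) * (Conv1 ξ + Conv2 ξ) ^ (2:ℝ) := fun ξ =>
            ENNReal.mul_rpow_of_nonneg _ _ (by norm_num)
          rw [lintegral_congr he, lintegral_const_mul' _ _ hk2,
            ENNReal.mul_rpow_of_nonneg _ _ (by norm_num : (0:ℝ) ≤ 1/2), ← ENNReal.rpow_mul]
          norm_num
      _ ≤ k * ((∫⁻ ξ, Conv1 ξ ^ (2:ℝ)) ^ ((1:ℝ)/2)
            + (∫⁻ ξ, Conv2 ξ ^ (2:ℝ)) ^ ((1:ℝ)/2)) := by
          refine mul_le_mul' le_rfl ?_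
          have h := ENNReal.lintegral_Lp_add_le aConv1 aConv2
            (by norm_num : (1:ℝ) ≤ 2)
          simpa using h
  have b1 : (∫⁻ ξ, Conv1 ξ ^ (2:ℝ)) ^ ((1:ℝ)/2) ≤ (Ae t * eN t G) * eN t F := by
    have hswap : ∀ ξ, Conv1 ξ = ∫⁻ η, g0 η * wF (ξ - η) := by
      intro ξ
      have h := lint_sub_left (fun x => g0 x * wF (ξ - x)) ξ
      rw [hConv1]
      rw [← h]
      apply lintegral_congr; intro x
      rw [show ξ - (ξ - x) = x by ring, mul_comm]
    calc (∫⁻ ξ, Conv1 ξ ^ (2:ℝ)) ^ ((1:ℝ)/2)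
        = (∫⁻ ξ, (∫⁻ η, g0 η * wF (ξ - η)) ^ (2:ℝ)) ^ ((1:ℝ)/2) := by
          rw [lintegral_congr fun ξ => by rw [hswap ξ]]
      _ ≤ ((∫⁻ η, g0 η) ^ (2:ℝ) * ∫⁻ ζ, wF ζ ^ (2:ℝ)) ^ ((1:ℝ)/2) :=
          ENNReal.rpow_le_rpow (conv_L2 ag0 awF) (by norm_num)
      _ = (∫⁻ η, g0 η) * (∫⁻ ζ, wF ζ ^ (2:ℝ)) ^ ((1:ℝ)/2) := by
          rw [ENNReal.mul_rpow_of_nonneg _ _ (by norm_num : (0:ℝ) ≤ 1/2),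
            ← ENNReal.rpow_mul]
          norm_num
      _ ≤ (Ae t * eN t G) * eN t F := by
          refine mul_le_mul' (l1_bound ht hG) ?_
          rw [eN, eLpNorm_two_eq]
  have b2 : (∫⁻ ξ, Conv2 ξ ^ (2:ℝ)) ^ ((1:ℝ)/2) ≤ (Ae t * eN t F) * eN t G := by
    calc (∫⁻ ξ, Conv2 ξ ^ (2:ℝ)) ^ ((1:ℝ)/2)
        ≤ ((∫⁻ η, f0 η) ^ (2:ℝ) * ∫⁻ ζ, wG ζ ^ (2:ℝ)) ^ ((1:ℝ)/2) :=
          ENNReal.rpow_le_rpow (conv_L2 af0 awG) (by norm_num)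
      _ = (∫⁻ η, f0 η) * (∫⁻ ζ, wG ζ ^ (2:ℝ)) ^ ((1:ℝ)/2) := by
          rw [ENNReal.mul_rpow_of_nonneg _ _ (by norm_num : (0:ℝ) ≤ 1/2),
            ← ENNReal.rpow_mul]
          norm_num
      _ ≤ (Ae t * eN t F) * eN t G := by
          refine mul_le_mul' (l1_bound ht hF) ?_
          rw [eN, eLpNorm_two_eq]
  calc eN t (fourierMul F G)
      ≤ k * ((∫⁻ ξ, Conv1 ξ ^ (2:ℝ)) ^ ((1:ℝ)/2)
            + (∫⁻ ξ, Conv2 ξ ^ (2:ℝ)) ^ ((1:ℝ)/2)) := main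
    _ ≤ k * ((Ae t * eN t G) * eN t F + (Ae t * eN t F) * eN t G) :=
        mul_le_mul' le_rfl (add_le_add b1 b2)
    _ = cAlg t * eN t F * eN t G := by
        rw [cAlg, ← hk]
        ring

end FLip
namespace FLip

open MeasureTheory
open scoped ENNReal NNReal

/-! ### Bilinearity of `fourierMul` on `L²` and the Lipschitz product bound -/

lemma memL2_shift {G : ℝ → ℂ} (hG : MemLp G 2 volume) (ξ : ℝ) :
    MemLp (fun η => G (ξ - η)) 2 volume :=
  hG.comp_measurePreserving (Measure.measurePreserving_sub_left volume ξ)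

lemma integrable_mul_L2 {f g : ℝ → ℂ} (hf : MemLp f 2 volume) (hg : MemLp g 2 volume) :
    Integrable (fun x => f x * g x) volume := by
  have h : MemLp (f • g) 1 volume :=
    hg.smul hf
  rw [← memLp_one_iff_integrable]
  exact h

lemma fourierMul_t_sub {F₁ F₂ G₁ G₂ : ℝ → ℂ} (h₁ : MemLp F₁ 2 volume)
    (h₂ : MemLp F₂ 2 volume) (h₃ : MemLp G₁ 2 volume) (h₄ : MemLp G₂ 2 volume) (ξ : ℝ) :
    fourierMul F₁ G₁ ξ - fourierMul F₂ G₂ ξ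
      = fourierMul (fun η => F₁ η - F₂ η) G₁ ξ
        + fourierMul F₂ (fun η => G₁ η - G₂ η) ξ := by
  unfold fourierMul
  rw [← mul_sub, ← mul_add]
  congr 1
  have i11 : Integrable (fun η => F₁ η * G₁ (ξ - η)) volume :=
    integrable_mul_L2 h₁ (memL2_shift h₃ ξ)
  have i22 : Integrable (fun η => F₂ η * G₂ (ξ - η)) volume :=
    integrable_mul_L2 h₂ (memL2_shift h₄ ξ)
  have ia : Integrable (fun η => (F₁ η - F₂ η) * G₁ (ξ - η)) volume :=
    integrable_mul_L2 (h₁.sub h₂) (memL2_shift h₃ ξ)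
  have ib : Integrable (fun η => F₂ η * (G₁ (ξ - η) - G₂ (ξ - η))) volume :=
    integrable_mul_L2 h₂ ((memL2_shift h₃ ξ).sub (memL2_shift h₄ ξ))
  have e : ∀ η, (F₁ η - F₂ η) * G₁ (ξ-η) + F₂ η * (G₁ (ξ-η) - G₂ (ξ-η))
      = F₁ η * G₁ (ξ-η) - F₂ η * G₂ (ξ-η) := fun η => by ring
  calc (∫ η : ℝ, F₁ η * G₁ (ξ - η)) - ∫ η : ℝ, F₂ η * G₂ (ξ - η)
      = ∫ η : ℝ, (F₁ η * G₁ (ξ - η) - F₂ η * G₂ (ξ - η)) := (integral_sub i11 i22).symm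
    _ = ∫ η : ℝ, ((F₁ η - F₂ η) * G₁ (ξ-η) + F₂ η * (G₁ (ξ-η) - G₂ (ξ-η))) := by
        apply integral_congr_ae
        filter_upwards with η using (e η).symm
    _ = (∫ η : ℝ, (F₁ η - F₂ η) * G₁ (ξ - η))
        + ∫ η : ℝ, F₂ η * (G₁ (ξ - η) - G₂ (ξ - η)) := integral_add ia ib

lemma eN_mul_diff {t : ℝ} (ht : 1/2 < t) {F₁ F₂ G₁ G₂ : ℝ → ℂ}
    (h₁ : MemLp F₁ 2 volume) (h₂ : MemLp F₂ 2 volume) (h₃ : MemLp G₁ 2 volume)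
    (h₄ : MemLp G₂ 2 volume) :
    eN t (fun ξ => fourierMul F₁ G₁ ξ - fourierMul F₂ G₂ ξ)
      ≤ cAlg t * eN t (fun ξ => F₁ ξ - F₂ ξ) * eN t G₁
        + cAlg t * eN t F₂ * eN t (fun ξ => G₁ ξ - G₂ ξ) := by
  have hd1 : AEStronglyMeasurable (fun η => F₁ η - F₂ η) volume := h₁.1.sub h₂.1
  have hd2 : AEStronglyMeasurable (fun η => G₁ η - G₂ η) volume := h₃.1.sub h₄.1
  calc eN t (fun ξ => fourierMul F₁ G₁ ξ - fourierMul F₂ G₂ ξ)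
      = eN t (fun ξ => fourierMul (fun η => F₁ η - F₂ η) G₁ ξ
          + fourierMul F₂ (fun η => G₁ η - G₂ η) ξ) :=
        eN_congr (fourierMul_t_sub h₁ h₂ h₃ h₄)
    _ ≤ eN t (fourierMul (fun η => F₁ η - F₂ η) G₁)
        + eN t (fourierMul F₂ (fun η => G₁ η - G₂ η)) :=
        eN_add_le (aesm_fourierMul hd1 h₃.1) (aesm_fourierMul h₂.1 hd2)
    _ ≤ cAlg t * eN t (fun ξ => F₁ ξ - F₂ ξ) * eN t G₁
        + cAlg t * eN t F₂ * eN t (fun ξ => G₁ ξ - G₂ ξ) :=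
        add_le_add (eN_fourierMul_le ht hd1 h₃.1) (eN_fourierMul_le ht h₂.1 hd2)

/-! ### The multiplier bound -/

lemma key_ineq {a : ℝ} (ha0 : 0 < a) (ha1 : a < 1) (ξ : ℝ) :
    (1+ξ^2)^((1:ℝ)/2) * |ξ| ≤ (2/a) * (1 + a*ξ^2) := by
  have h2 : (1+ξ^2)^((1:ℝ)/2) * |ξ| ≤ (1+|ξ|) * |ξ| :=
    mul_le_mul_of_nonneg_right (rpow_half_le ξ) (abs_nonneg ξ)
  have h3 : (1+|ξ|)*|ξ| ≤ 1 + 2*ξ^2 := by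
    nlinarith [abs_nonneg ξ, _root_.sq_abs ξ, sq_nonneg (|ξ| - 1)]
  have h5 : (2:ℝ) ≤ 2/a := by rw [le_div_iff₀ ha0]; nlinarith
  have expand : (2/a)*(1 + a*ξ^2) = 2/a + 2*ξ^2 := by field_simp
  linarith

lemma symbol_bound {a : ℝ} (ha0 : 0 < a) (ha1 : a < 1) (s ξ : ℝ) :
    (1+ξ^2)^(s/2) * (|ξ| / (1 + a*ξ^2)) ≤ (2/a) * (1+ξ^2)^((s-1)/2) := by
  have hd : (0:ℝ) < 1 + a*ξ^2 := by nlinarith [sq_nonneg ξ]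
  have hkey := key_ineq ha0 ha1 ξ
  calc (1+ξ^2)^(s/2) * (|ξ| / (1 + a*ξ^2))
      = (1+ξ^2)^((s-1)/2) * ((1+ξ^2)^((1:ℝ)/2) * |ξ| / (1 + a*ξ^2)) := by
        rw [weight_split s ξ]; ring
    _ ≤ (1+ξ^2)^((s-1)/2) * (2/a) := by
        refine mul_le_mul_of_nonneg_left ?_ (w_pos (s-1) ξ).le
        rw [div_le_iff₀ hd]
        calc (1+ξ^2)^((1:ℝ)/2) * |ξ| ≤ (2/a) * (1 + a*ξ^2) := hkey
          _ = 2/a * (1 + a*ξ^2) := rfl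
    _ = (2/a) * (1+ξ^2)^((s-1)/2) := mul_comm _ _

lemma eN_symbol {s b : ℝ} (hb : b < 0) (hb1 : -b < 1) (G : ℝ → ℂ) :
    eN s (fun ξ => -(Complex.I * (ξ:ℂ) / (1 - ((b : ℝ):ℂ) * (ξ:ℂ)^2)) * G ξ)
      ≤ ENNReal.ofReal (2/(-b)) * eN (s-1) G := by
  set a : ℝ := -b with ha
  have ha0 : 0 < a := by simp [ha]; linarith
  refine eN_le_mul_of_pointwise (by positivity) ?_
  intro ξ
  have hd : (1 - ((b : ℝ):ℂ) * (ξ:ℂ)^2) = (((1 + a*ξ^2 : ℝ)):ℂ) := by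
    push_cast [ha]; ring
  have hdpos : (0:ℝ) < 1 + a*ξ^2 := by nlinarith [sq_nonneg ξ]
  have hnorm : ‖-(Complex.I * (ξ:ℂ) / (1 - ((b : ℝ):ℂ) * (ξ:ℂ)^2))‖
      = |ξ| / (1 + a*ξ^2) := by
    rw [norm_neg, norm_div, hd, norm_mul, Complex.norm_I, one_mul]
    simp only [Complex.norm_real, Real.norm_eq_abs]
    rw [abs_of_pos hdpos]
  simp only [sobolevWeight, norm_mul, Complex.norm_real, Real.norm_eq_abs]
  rw [abs_of_pos (w_pos s ξ), abs_of_pos (w_pos (s-1) ξ), hnorm]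
  calc (1+ξ^2)^(s/2) * (|ξ| / (1 + a*ξ^2) * ‖G ξ‖)
      = ((1+ξ^2)^(s/2) * (|ξ| / (1 + a*ξ^2))) * ‖G ξ‖ := by ring
    _ ≤ ((2/a) * (1+ξ^2)^((s-1)/2)) * ‖G ξ‖ :=
        mul_le_mul_of_nonneg_right (symbol_bound ha0 hb1 s ξ) (norm_nonneg _)
    _ = 2/a * ((1+ξ^2)^((s-1)/2) * ‖G ξ‖) := by ring

end FLip
/-- For `s > 3/2` and parameters `ε, μ > 0`, `β < 0`, `μ|β| < 1`, the map `f` is Lipschitz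
in the `H^s` norm on bounded sets of `H^s(ℝ)`: `‖f(u) - f(v)‖_s ≤ c₄ ‖u - v‖_s` with `c₄`
depending only on `μ, β`, the other parameters, and (a bound `C` for) `‖u‖_s, ‖v‖_s`. -/
theorem f_lipschitz_Hs (s ε μ ι κ α β γ δ : ℝ) (hs : 3 / 2 < s) (hε : 0 < ε) (hμ : 0 < μ)
    (hβ : β < 0) (hμβ : μ * |β| < 1) (C : ℝ) :
    ∃ c₄ : ℝ, 0 < c₄ ∧ ∀ U V : ℝ → ℂ,
      MemHSobolev s U → RealSymm U → hsNorm s U ≤ C →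
        MemHSobolev s V → RealSymm V → hsNorm s V ≤ C →
          hsNorm s (fun ξ => fourierF ε μ ι κ α β γ δ U ξ - fourierF ε μ ι κ α β γ δ V ξ)
            ≤ c₄ * hsNorm s (fun ξ => U ξ - V ξ) := by
  classical
  have ht : 1/2 < s - 1 := by linarith
  have ht0 : (0:ℝ) ≤ s - 1 := by linarith
  have hts' : s - 1 ≤ s := by linarith
  have hs0 : (0:ℝ) ≤ s := by linarith
  have hb : μ * β < 0 := mul_neg_of_pos_of_neg hμ hβ
  have hb1 : -(μ * β) < 1 := by
    have habs : μ * |β| = -(μ*β) := by rw [abs_of_neg hβ]; ring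
    linarith [hμβ]
  set t : ℝ := s - 1 with htdef
  set c : ENNReal := FLip.cAlg t with hcdef
  have hc : c ≠ ⊤ := (FLip.cAlg_lt_top ht).ne
  set E : ENNReal := ENNReal.ofReal C with hEdef
  have hE : E ≠ ⊤ := ENNReal.ofReal_ne_top
  set M : ENNReal := ENNReal.ofReal (2/(-(μ*β))) with hMdef
  set r1 : ℝ := 1 - α / β with hr1
  set r2 : ℝ := (3 * ε - 2) / 4 - 1 / (2 * μ * β) with hr2
  set r3 : ℝ := ε ^ 2 * ι / 3 with hr3
  set r4 : ℝ := ε ^ 3 * κ / 4 with hr4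
  set r5 : ℝ := (3 * ε * μ * γ - ε * μ * δ - μ * β) / 2 with hr5
  set S : ENNReal := ENNReal.ofReal |r1|
     + ENNReal.ofReal |r2| * (2*c*E)
     + ENNReal.ofReal |r3| * (3*c^2*E^2)
     + ENNReal.ofReal |r4| * (4*c^3*E^3)
     + ENNReal.ofReal |r5| * (2*c*E) with hSdef
  set K : ENNReal := M * S with hKdef
  have h2cE : (2*c*E : ENNReal) ≠ ⊤ :=
    ENNReal.mul_ne_top (ENNReal.mul_ne_top (by norm_num) hc) hE
  have hcE2 : (3*c^2*E^2 : ENNReal) ≠ ⊤ := by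
    refine ENNReal.mul_ne_top (ENNReal.mul_ne_top (by norm_num) ?_) ?_
    · exact ENNReal.pow_ne_top hc
    · exact ENNReal.pow_ne_top hE
  have hcE3 : (4*c^3*E^3 : ENNReal) ≠ ⊤ := by
    refine ENNReal.mul_ne_top (ENNReal.mul_ne_top (by norm_num) ?_) ?_
    · exact ENNReal.pow_ne_top hc
    · exact ENNReal.pow_ne_top hE
  have hS : S ≠ ⊤ := by
    rw [hSdef]
    refine ENNReal.add_ne_top.2 ⟨ENNReal.add_ne_top.2 ⟨ENNReal.add_ne_top.2
      ⟨ENNReal.add_ne_top.2 ⟨ENNReal.ofReal_ne_top, ?_⟩, ?_⟩, ?_⟩, ?_⟩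
    · exact ENNReal.mul_ne_top ENNReal.ofReal_ne_top h2cE
    · exact ENNReal.mul_ne_top ENNReal.ofReal_ne_top hcE2
    · exact ENNReal.mul_ne_top ENNReal.ofReal_ne_top hcE3
    · exact ENNReal.mul_ne_top ENNReal.ofReal_ne_top h2cE
  have hK : K ≠ ⊤ := ENNReal.mul_ne_top ENNReal.ofReal_ne_top hS
  refine ⟨K.toReal + 1, by positivity, ?_⟩
  intro U V hU _ hUC hV _ hVC
  have hUw : MeasureTheory.MemLp (sobolevWeight s U) 2 MeasureTheory.volume := hU
  have hVw : MeasureTheory.MemLp (sobolevWeight s V) 2 MeasureTheory.volume := hV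
  have aU : MeasureTheory.AEStronglyMeasurable U MeasureTheory.volume :=
    FLip.aesm_of_weight hUw.1
  have aV : MeasureTheory.AEStronglyMeasurable V MeasureTheory.volume :=
    FLip.aesm_of_weight hVw.1
  have hUfin : FLip.eN s U ≠ ⊤ := hUw.2.ne
  have hVfin : FLip.eN s V ≠ ⊤ := hVw.2.ne
  have hC0 : 0 ≤ C := le_trans ENNReal.toReal_nonneg hUC
  have hUE : FLip.eN s U ≤ E := by
    rw [hEdef]; exact (ENNReal.le_ofReal_iff_toReal_le hUfin hC0).2 hUC
  have hVE : FLip.eN s V ≤ E := by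
    rw [hEdef]; exact (ENNReal.le_ofReal_iff_toReal_le hVfin hC0).2 hVC
  have hUtE : FLip.eN t U ≤ E := le_trans (FLip.eN_mono_exp hts' U) hUE
  have hVtE : FLip.eN t V ≤ E := le_trans (FLip.eN_mono_exp hts' V) hVE
  have U2 : MeasureTheory.MemLp U 2 MeasureTheory.volume := FLip.memL2_of_eN hs0 aU hUfin
  have V2 : MeasureTheory.MemLp V 2 MeasureTheory.volume := FLip.memL2_of_eN hs0 aV hVfin
  -- derivatives
  have contI : Continuous fun ξ : ℝ => Complex.I * (ξ:ℂ) :=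
    continuous_const.mul Complex.continuous_ofReal
  have aDU : MeasureTheory.AEStronglyMeasurable (fourierDeriv U) MeasureTheory.volume :=
    contI.aestronglyMeasurable.mul aU
  have aDV : MeasureTheory.AEStronglyMeasurable (fourierDeriv V) MeasureTheory.volume :=
    contI.aestronglyMeasurable.mul aV
  have hDUt : FLip.eN t (fourierDeriv U) ≤ E := by
    have h := FLip.eN_deriv_le s U
    rw [← htdef] at h
    exact le_trans h hUE
  have hDVt : FLip.eN t (fourierDeriv V) ≤ E := by
    have h := FLip.eN_deriv_le s V
    rw [← htdef] at h
    exact le_trans h hVE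
  have DU2 : MeasureTheory.MemLp (fourierDeriv U) 2 MeasureTheory.volume :=
    FLip.memL2_of_eN ht0 aDU (lt_of_le_of_lt hDUt hE.lt_top).ne
  have DV2 : MeasureTheory.MemLp (fourierDeriv V) 2 MeasureTheory.volume :=
    FLip.memL2_of_eN ht0 aDV (lt_of_le_of_lt hDVt hE.lt_top).ne
  -- powers
  have am2U : MeasureTheory.AEStronglyMeasurable (fourierMul U U) MeasureTheory.volume :=
    FLip.aesm_fourierMul aU aU
  have am2V : MeasureTheory.AEStronglyMeasurable (fourierMul V V) MeasureTheory.volume :=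
    FLip.aesm_fourierMul aV aV
  have hm2U : FLip.eN t (fourierMul U U) ≤ c*E*E := by
    refine le_trans (FLip.eN_fourierMul_le ht aU aU) ?_
    exact mul_le_mul' (mul_le_mul' le_rfl hUtE) hUtE
  have hm2V : FLip.eN t (fourierMul V V) ≤ c*E*E := by
    refine le_trans (FLip.eN_fourierMul_le ht aV aV) ?_
    exact mul_le_mul' (mul_le_mul' le_rfl hVtE) hVtE
  have hcEE : (c*E*E : ENNReal) ≠ ⊤ := ENNReal.mul_ne_top (ENNReal.mul_ne_top hc hE) hE
  have m2U2 : MeasureTheory.MemLp (fourierMul U U) 2 MeasureTheory.volume :=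
    FLip.memL2_of_eN ht0 am2U (lt_of_le_of_lt hm2U hcEE.lt_top).ne
  have m2V2 : MeasureTheory.MemLp (fourierMul V V) 2 MeasureTheory.volume :=
    FLip.memL2_of_eN ht0 am2V (lt_of_le_of_lt hm2V hcEE.lt_top).ne
  have am3U : MeasureTheory.AEStronglyMeasurable (fourierMul U (fourierMul U U))
      MeasureTheory.volume := FLip.aesm_fourierMul aU am2U
  have am3V : MeasureTheory.AEStronglyMeasurable (fourierMul V (fourierMul V V))
      MeasureTheory.volume := FLip.aesm_fourierMul aV am2V
  have hm3U : FLip.eN t (fourierMul U (fourierMul U U)) ≤ c*E*(c*E*E) := by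
    refine le_trans (FLip.eN_fourierMul_le ht aU am2U) ?_
    refine mul_le_mul' (mul_le_mul' le_rfl hUtE) hm2U
  have hm3V : FLip.eN t (fourierMul V (fourierMul V V)) ≤ c*E*(c*E*E) := by
    refine le_trans (FLip.eN_fourierMul_le ht aV am2V) ?_
    refine mul_le_mul' (mul_le_mul' le_rfl hVtE) hm2V
  have hcEcEE : (c*E*(c*E*E) : ENNReal) ≠ ⊤ :=
    ENNReal.mul_ne_top (ENNReal.mul_ne_top hc hE) hcEE
  have m3U2 : MeasureTheory.MemLp (fourierMul U (fourierMul U U)) 2 MeasureTheory.volume :=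
    FLip.memL2_of_eN ht0 am3U (lt_of_le_of_lt hm3U hcEcEE.lt_top).ne
  have m3V2 : MeasureTheory.MemLp (fourierMul V (fourierMul V V)) 2 MeasureTheory.volume :=
    FLip.memL2_of_eN ht0 am3V (lt_of_le_of_lt hm3V hcEcEE.lt_top).ne
  -- the difference
  set D : ENNReal := FLip.eN s (fun ξ => U ξ - V ξ) with hDdef
  have hDfin : D ≠ ⊤ := by
    have hm : MeasureTheory.MemLp (sobolevWeight s (fun ξ => U ξ - V ξ)) 2
        MeasureTheory.volume := by
      have he : sobolevWeight s (fun ξ => U ξ - V ξ)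
          = fun ξ => sobolevWeight s U ξ - sobolevWeight s V ξ := by
        funext ξ; simp only [sobolevWeight]; ring
      rw [he]; exact hUw.sub hVw
    exact hm.2.ne
  have bDt : FLip.eN t (fun ξ => U ξ - V ξ) ≤ D := by
    rw [hDdef]; exact FLip.eN_mono_exp hts' _
  -- quadratic difference
  have b2 : FLip.eN t (fun ξ => fourierMul U U ξ - fourierMul V V ξ) ≤ 2*c*E*D := by
    calc FLip.eN t (fun ξ => fourierMul U U ξ - fourierMul V V ξ)
        ≤ c * FLip.eN t (fun ξ => U ξ - V ξ) * FLip.eN t U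
          + c * FLip.eN t V * FLip.eN t (fun ξ => U ξ - V ξ) :=
          FLip.eN_mul_diff ht U2 V2 U2 V2
      _ ≤ c * D * E + c * E * D :=
          add_le_add (mul_le_mul' (mul_le_mul' le_rfl bDt) hUtE)
            (mul_le_mul' (mul_le_mul' le_rfl hVtE) bDt)
      _ = 2*c*E*D := by ring
  -- cubic difference
  have b3 : FLip.eN t (fun ξ => fourierMul U (fourierMul U U) ξ
      - fourierMul V (fourierMul V V) ξ) ≤ 3*c^2*E^2*D := by
    calc FLip.eN t (fun ξ => fourierMul U (fourierMul U U) ξ - fourierMul V (fourierMul V V) ξ)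
        ≤ c * FLip.eN t (fun ξ => U ξ - V ξ) * FLip.eN t (fourierMul U U)
          + c * FLip.eN t V
            * FLip.eN t (fun ξ => fourierMul U U ξ - fourierMul V V ξ) :=
          FLip.eN_mul_diff ht U2 V2 m2U2 m2V2
      _ ≤ c * D * (c*E*E) + c * E * (2*c*E*D) :=
          add_le_add (mul_le_mul' (mul_le_mul' le_rfl bDt) hm2U)
            (mul_le_mul' (mul_le_mul' le_rfl hVtE) b2)
      _ = 3*c^2*E^2*D := by ring
  -- quartic difference
  have b4 : FLip.eN t (fun ξ => fourierMul U (fourierMul U (fourierMul U U)) ξ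
      - fourierMul V (fourierMul V (fourierMul V V)) ξ) ≤ 4*c^3*E^3*D := by
    calc FLip.eN t (fun ξ => fourierMul U (fourierMul U (fourierMul U U)) ξ
          - fourierMul V (fourierMul V (fourierMul V V)) ξ)
        ≤ c * FLip.eN t (fun ξ => U ξ - V ξ) * FLip.eN t (fourierMul U (fourierMul U U))
          + c * FLip.eN t V
            * FLip.eN t (fun ξ => fourierMul U (fourierMul U U) ξ
                - fourierMul V (fourierMul V V) ξ) :=
          FLip.eN_mul_diff ht U2 V2 m3U2 m3V2
      _ ≤ c * D * (c*E*(c*E*E)) + c * E * (3*c^2*E^2*D) :=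
          add_le_add (mul_le_mul' (mul_le_mul' le_rfl bDt) hm3U)
            (mul_le_mul' (mul_le_mul' le_rfl hVtE) b3)
      _ = 4*c^3*E^3*D := by ring
  -- derivative-square difference
  have hDd : FLip.eN t (fun ξ => fourierDeriv U ξ - fourierDeriv V ξ) ≤ D := by
    have he : (fun ξ => fourierDeriv U ξ - fourierDeriv V ξ)
        = fourierDeriv (fun ξ => U ξ - V ξ) := by
      funext ξ; simp only [fourierDeriv]; ring
    rw [he]
    have h := FLip.eN_deriv_le s (fun ξ => U ξ - V ξ)
    rw [← htdef] at h
    rw [hDdef]; exact h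
  have b5 : FLip.eN t (fun ξ => fourierMul (fourierDeriv U) (fourierDeriv U) ξ
      - fourierMul (fourierDeriv V) (fourierDeriv V) ξ) ≤ 2*c*E*D := by
    calc FLip.eN t (fun ξ => fourierMul (fourierDeriv U) (fourierDeriv U) ξ
          - fourierMul (fourierDeriv V) (fourierDeriv V) ξ)
        ≤ c * FLip.eN t (fun ξ => fourierDeriv U ξ - fourierDeriv V ξ)
            * FLip.eN t (fourierDeriv U)
          + c * FLip.eN t (fourierDeriv V)
            * FLip.eN t (fun ξ => fourierDeriv U ξ - fourierDeriv V ξ) :=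
          FLip.eN_mul_diff ht DU2 DV2 DU2 DV2
      _ ≤ c * D * E + c * E * D :=
          add_le_add (mul_le_mul' (mul_le_mul' le_rfl hDd) hDUt)
            (mul_le_mul' (mul_le_mul' le_rfl hDVt) hDd)
      _ = 2*c*E*D := by ring
  -- assemble g
  have hgdecomp : ∀ ξ, fourierG ε μ ι κ α β γ δ U ξ - fourierG ε μ ι κ α β γ δ V ξ
      = ((r1:ℝ):ℂ) * (U ξ - V ξ)
        + (((r2:ℝ):ℂ) * (fourierMul U U ξ - fourierMul V V ξ)
        + (((r3:ℝ):ℂ) * (fourierMul U (fourierMul U U) ξ - fourierMul V (fourierMul V V) ξ)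
        + (((r4:ℝ):ℂ) * (fourierMul U (fourierMul U (fourierMul U U)) ξ
              - fourierMul V (fourierMul V (fourierMul V V)) ξ)
        + ((r5:ℝ):ℂ) * (fourierMul (fourierDeriv U) (fourierDeriv U) ξ
              - fourierMul (fourierDeriv V) (fourierDeriv V) ξ)))) := by
    intro ξ
    simp only [fourierG, hr1, hr2, hr3, hr4, hr5]
    push_cast
    ring
  -- measurability of the pieces
  have aT1 : MeasureTheory.AEStronglyMeasurable
      (fun ξ => ((r1:ℝ):ℂ) * (U ξ - V ξ)) MeasureTheory.volume :=
    MeasureTheory.aestronglyMeasurable_const.mul (aU.sub aV)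
  have aT2 : MeasureTheory.AEStronglyMeasurable
      (fun ξ => ((r2:ℝ):ℂ) * (fourierMul U U ξ - fourierMul V V ξ)) MeasureTheory.volume :=
    MeasureTheory.aestronglyMeasurable_const.mul (am2U.sub am2V)
  have aT3 : MeasureTheory.AEStronglyMeasurable
      (fun ξ => ((r3:ℝ):ℂ) * (fourierMul U (fourierMul U U) ξ
        - fourierMul V (fourierMul V V) ξ)) MeasureTheory.volume :=
    MeasureTheory.aestronglyMeasurable_const.mul (am3U.sub am3V)
  have aT4 : MeasureTheory.AEStronglyMeasurable
      (fun ξ => ((r4:ℝ):ℂ) * (fourierMul U (fourierMul U (fourierMul U U)) ξ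
        - fourierMul V (fourierMul V (fourierMul V V)) ξ)) MeasureTheory.volume :=
    MeasureTheory.aestronglyMeasurable_const.mul
      ((FLip.aesm_fourierMul aU am3U).sub (FLip.aesm_fourierMul aV am3V))
  have aT5 : MeasureTheory.AEStronglyMeasurable
      (fun ξ => ((r5:ℝ):ℂ) * (fourierMul (fourierDeriv U) (fourierDeriv U) ξ
        - fourierMul (fourierDeriv V) (fourierDeriv V) ξ)) MeasureTheory.volume :=
    MeasureTheory.aestronglyMeasurable_const.mul
      ((FLip.aesm_fourierMul aDU aDU).sub (FLip.aesm_fourierMul aDV aDV))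
  have hΔg : FLip.eN t (fun ξ => fourierG ε μ ι κ α β γ δ U ξ
      - fourierG ε μ ι κ α β γ δ V ξ) ≤ S * D := by
    calc FLip.eN t (fun ξ => fourierG ε μ ι κ α β γ δ U ξ - fourierG ε μ ι κ α β γ δ V ξ)
        = FLip.eN t (fun ξ => ((r1:ℝ):ℂ) * (U ξ - V ξ)
          + (((r2:ℝ):ℂ) * (fourierMul U U ξ - fourierMul V V ξ)
          + (((r3:ℝ):ℂ) * (fourierMul U (fourierMul U U) ξ - fourierMul V (fourierMul V V) ξ)
          + (((r4:ℝ):ℂ) * (fourierMul U (fourierMul U (fourierMul U U)) ξ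
                - fourierMul V (fourierMul V (fourierMul V V)) ξ)
          + ((r5:ℝ):ℂ) * (fourierMul (fourierDeriv U) (fourierDeriv U) ξ
                - fourierMul (fourierDeriv V) (fourierDeriv V) ξ))))) :=
          FLip.eN_congr hgdecomp
      _ ≤ FLip.eN t (fun ξ => ((r1:ℝ):ℂ) * (U ξ - V ξ))
          + (FLip.eN t (fun ξ => ((r2:ℝ):ℂ) * (fourierMul U U ξ - fourierMul V V ξ))
          + (FLip.eN t (fun ξ => ((r3:ℝ):ℂ) * (fourierMul U (fourierMul U U) ξ
                - fourierMul V (fourierMul V V) ξ))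
          + (FLip.eN t (fun ξ => ((r4:ℝ):ℂ) * (fourierMul U (fourierMul U (fourierMul U U)) ξ
                - fourierMul V (fourierMul V (fourierMul V V)) ξ))
            + FLip.eN t (fun ξ => ((r5:ℝ):ℂ)
                * (fourierMul (fourierDeriv U) (fourierDeriv U) ξ
                  - fourierMul (fourierDeriv V) (fourierDeriv V) ξ))))) := by
          refine le_trans (FLip.eN_add_le aT1 (aT2.add (aT3.add (aT4.add aT5)))) ?_
          refine add_le_add le_rfl ?_
          refine le_trans (FLip.eN_add_le aT2 (aT3.add (aT4.add aT5))) ?_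
          refine add_le_add le_rfl ?_
          refine le_trans (FLip.eN_add_le aT3 (aT4.add aT5)) ?_
          refine add_le_add le_rfl ?_
          exact FLip.eN_add_le aT4 aT5
      _ ≤ ENNReal.ofReal |r1| * D
          + (ENNReal.ofReal |r2| * (2*c*E*D)
          + (ENNReal.ofReal |r3| * (3*c^2*E^2*D)
          + (ENNReal.ofReal |r4| * (4*c^3*E^3*D)
            + ENNReal.ofReal |r5| * (2*c*E*D)))) := by
          refine add_le_add ?_ (add_le_add ?_ (add_le_add ?_ (add_le_add ?_ ?_))) <;>
            rw [FLip.eN_real_const_mul]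
          · exact mul_le_mul' le_rfl bDt
          · exact mul_le_mul' le_rfl b2
          · exact mul_le_mul' le_rfl b3
          · exact mul_le_mul' le_rfl b4
          · exact mul_le_mul' le_rfl b5
      _ = S * D := by rw [hSdef]; ring
  -- the multiplier
  have hFdiff : ∀ ξ, fourierF ε μ ι κ α β γ δ U ξ - fourierF ε μ ι κ α β γ δ V ξ
      = -(Complex.I * (ξ:ℂ) / (1 - ((μ * β : ℝ):ℂ) * (ξ:ℂ)^2))
        * ((fun ζ => fourierG ε μ ι κ α β γ δ U ζ - fourierG ε μ ι κ α β γ δ V ζ) ξ) := by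
    intro ξ
    simp only [fourierF]
    ring
  have final_e : FLip.eN s (fun ξ => fourierF ε μ ι κ α β γ δ U ξ
      - fourierF ε μ ι κ α β γ δ V ξ) ≤ K * D := by
    calc FLip.eN s (fun ξ => fourierF ε μ ι κ α β γ δ U ξ - fourierF ε μ ι κ α β γ δ V ξ)
        = FLip.eN s (fun ξ => -(Complex.I * (ξ:ℂ) / (1 - ((μ * β : ℝ):ℂ) * (ξ:ℂ)^2))
            * ((fun ζ => fourierG ε μ ι κ α β γ δ U ζ - fourierG ε μ ι κ α β γ δ V ζ) ξ)) :=
          FLip.eN_congr hFdiff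
      _ ≤ M * FLip.eN (s-1) (fun ζ => fourierG ε μ ι κ α β γ δ U ζ
            - fourierG ε μ ι κ α β γ δ V ζ) := by
          rw [hMdef]
          exact FLip.eN_symbol hb hb1 _
      _ ≤ M * (S * D) := by
          rw [← htdef]
          exact mul_le_mul' le_rfl hΔg
      _ = K * D := by rw [hKdef, mul_assoc]
  -- conversion to real numbers
  have hKD : K * D ≠ ⊤ := ENNReal.mul_ne_top hK hDfin
  calc hsNorm s (fun ξ => fourierF ε μ ι κ α β γ δ U ξ - fourierF ε μ ι κ α β γ δ V ξ)
      = (FLip.eN s (fun ξ => fourierF ε μ ι κ α β γ δ U ξ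
          - fourierF ε μ ι κ α β γ δ V ξ)).toReal := rfl
    _ ≤ (K * D).toReal := ENNReal.toReal_mono hKD final_e
    _ = K.toReal * D.toReal := ENNReal.toReal_mul
    _ ≤ (K.toReal + 1) * D.toReal :=
        mul_le_mul_of_nonneg_right (by linarith) ENNReal.toReal_nonneg
    _ = (K.toReal + 1) * hsNorm s (fun ξ => U ξ - V ξ) := rfl

end
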